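/- Let A be a trace-free symmetric 3×3 real matrix with Frobenius norm |A|. Then for every vector v ∈ R³, ⟨Av, v⟩ ≤ √(2/3)·|A|·|v|², and this bound is sharp. -/

import Mathlib

open Matrix

/-- For a trace-free symmetric real `3×3` matrix `A` with Frobenius norm `|A|`,
`⟨Av, v⟩ ≤ √(2/3)·|A|·|v|²` for every `v ∈ ℝ³`, and the bound is sharp. -/
theorem tracefree_symmetric_quadratic_form_bound
    (A : Matrix (Fin 3) (Fin 3) ℝ) (hA : A.IsSymm) (htr : A.trace = 0) :
    (∀ v : Fin 3 → ℝ,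
        A.mulVec v ⬝ᵥ v
          ≤ Real.sqrt (2 / 3) * Real.sqrt (∑ i, ∑ j, A i j ^ 2) * (v ⬝ᵥ v)) ∧
    ∃ (B : Matrix (Fin 3) (Fin 3) ℝ) (w : Fin 3 → ℝ), B.IsSymm ∧ B.trace = 0 ∧
      B ≠ 0 ∧ w ≠ 0 ∧
      B.mulVec w ⬝ᵥ w
        = Real.sqrt (2 / 3) * Real.sqrt (∑ i, ∑ j, B i j ^ 2) * (w ⬝ᵥ w) := by
  constructor
  · intro v
    have hs0 : (0:ℝ) ≤ v ⬝ᵥ v := by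
      exact Finset.sum_nonneg fun i _ => mul_self_nonneg _
    set s : ℝ := v ⬝ᵥ v with hs
    have htr' : A 0 0 + A 1 1 + A 2 2 = 0 := by
      have : A.trace = A 0 0 + A 1 1 + A 2 2 := by
        simp [Matrix.trace, Matrix.diag, Fin.sum_univ_three]
      linarith [htr, this.symm.trans htr]
    have hsdef : s = v 0 * v 0 + v 1 * v 1 + v 2 * v 2 := by
      simp [hs, dotProduct, Fin.sum_univ_three]
    set f : Fin 3 × Fin 3 → ℝ := fun p => A p.1 p.2 with hf
    set g : Fin 3 × Fin 3 → ℝ :=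
      fun p => v p.1 * v p.2 - (if p.1 = p.2 then s / 3 else 0) with hg
    have cs2 := Finset.sum_mul_sq_le_sq_mul_sq (Finset.univ : Finset (Fin 3 × Fin 3)) f g
    have cs : ∑ p : Fin 3 × Fin 3, f p * g p
        ≤ Real.sqrt (∑ p : Fin 3 × Fin 3, f p ^ 2) * Real.sqrt (∑ p : Fin 3 × Fin 3, g p ^ 2) :=
      calc ∑ p : Fin 3 × Fin 3, f p * g p
          ≤ |∑ p : Fin 3 × Fin 3, f p * g p| := le_abs_self _
        _ = Real.sqrt ((∑ p : Fin 3 × Fin 3, f p * g p) ^ 2) := (Real.sqrt_sq_eq_abs _).symm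
        _ ≤ Real.sqrt ((∑ p : Fin 3 × Fin 3, f p ^ 2) * ∑ p : Fin 3 × Fin 3, g p ^ 2) :=
            Real.sqrt_le_sqrt cs2
        _ = _ := Real.sqrt_mul (Finset.sum_nonneg fun i _ => sq_nonneg _) _
    have e1 : (∑ p : Fin 3 × Fin 3, f p * g p) = A.mulVec v ⬝ᵥ v := by
      rw [Fintype.sum_prod_type]
      simp only [hf, hg]
      simp only [Matrix.mulVec, dotProduct, Fin.sum_univ_three]
      simp only [Fin.isValue, Fin.reduceEq, if_true, if_false, reduceIte, eq_self_iff_true]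
      linear_combination (-(s / 3)) * htr'
    have e2 : (∑ p : Fin 3 × Fin 3, g p ^ 2) = 2 / 3 * s ^ 2 := by
      rw [Fintype.sum_prod_type]
      simp only [hg]
      simp only [Fin.sum_univ_three, Fin.isValue, Fin.reduceEq, if_true, if_false, reduceIte,
        eq_self_iff_true]
      linear_combination (-(v 0 * v 0 + v 1 * v 1 + v 2 * v 2 + s / 3)) * hsdef
    have e3 : (∑ p : Fin 3 × Fin 3, f p ^ 2) = ∑ i, ∑ j, A i j ^ 2 := by
      rw [Fintype.sum_prod_type]
    rw [e1, e2, e3] at cs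
    have e4 : Real.sqrt (2 / 3 * s ^ 2) = Real.sqrt (2 / 3) * s := by
      rw [Real.sqrt_mul (by norm_num), Real.sqrt_sq hs0]
    rw [e4] at cs
    calc A.mulVec v ⬝ᵥ v
        ≤ Real.sqrt (∑ i, ∑ j, A i j ^ 2) * (Real.sqrt (2 / 3) * s) := cs
      _ = Real.sqrt (2 / 3) * Real.sqrt (∑ i, ∑ j, A i j ^ 2) * s := by ring
  · refine ⟨!![2,0,0;0,-1,0;0,0,-1], ![1,0,0], ?_, ?_, ?_, ?_, ?_⟩
    · ext i j
      fin_cases i <;> fin_cases j <;> rfl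
    · simp [Matrix.trace, Matrix.diag, Fin.sum_univ_three, Matrix.vecHead, Matrix.vecTail]
      norm_num
    · intro h
      have := congrFun (congrFun h 0) 0
      norm_num at this
    · intro h
      have := congrFun h 0
      norm_num at this
    · have h6 : (∑ i, ∑ j, (!![(2:ℝ),0,0;0,-1,0;0,0,-1]) i j ^ 2) = 6 := by
        norm_num [Fin.sum_univ_three, Matrix.vecHead, Matrix.vecTail, Matrix.cons_val_two]
      rw [h6]
      have : Real.sqrt (2 / 3) * Real.sqrt 6 = 2 := by
        rw [← Real.sqrt_mul (by norm_num)]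
        norm_num
      rw [this]
      norm_num [Matrix.mulVec, dotProduct, Fin.sum_univ_three, Matrix.vecHead, Matrix.vecTail,
        Matrix.cons_val_two]
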